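/- For any three k-tuples of distinct indices α = (i_1,...,i_k), β = (j_1,...,j_k), γ = (l_1,...,l_k), the Frobenius property S(T_{i_1}∘⋯∘T_{i_k}(P_β), P_γ) = S(P_α, T_{j_1}∘⋯∘T_{j_k}(P_γ)) holds, where P_{m_1,...,m_k} := T_{m_1}∘⋯∘T_{m_{k-1}}(p_{m_k}). In other words, the multiplication P_α * v := T_{i_1}∘⋯∘T_{i_k}(v) satisfies S(P_α * P_β, P_γ) = S(P_α, P_β * P_γ). -/

import Mathlib

noncomputable section

section Aux

variable {V : Type*} [AddCommGroup V] [Module ℂ V]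

lemma list_pairwise_comm {n : ℕ} (T : Fin n → Module.End ℂ V)
    (hT : ∀ i j, Commute (T i) (T j)) (L : List (Module.End ℂ V))
    (h : ∀ A ∈ L, ∃ i, A = T i) : L.Pairwise Commute := by
  induction L with
  | nil => simp
  | cons a l ih =>
    refine List.Pairwise.cons ?_ (ih fun A hA => h A (List.mem_cons_of_mem _ hA))
    intro b hb
    obtain ⟨i, rfl⟩ := h a List.mem_cons_self
    obtain ⟨j, rfl⟩ := h b (List.mem_cons_of_mem _ hb)
    exact hT i j

lemma sym_prod (S : V →ₗ[ℂ] V →ₗ[ℂ] ℂ) (L : List (Module.End ℂ V))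
    (h : ∀ A ∈ L, ∀ u v, S (A u) v = S u (A v))
    (hc : L.Pairwise Commute) (u v : V) :
    S (L.prod u) v = S u (L.prod v) := by
  have hrev : ∀ (L : List (Module.End ℂ V)),
      (∀ A ∈ L, ∀ u v, S (A u) v = S u (A v)) →
      ∀ u v, S (L.prod u) v = S u (L.reverse.prod v) := by
    intro L h
    induction L with
    | nil => simp
    | cons a l ih =>
      intro u v
      have ha := h a List.mem_cons_self
      have hl := ih (fun A hA => h A (List.mem_cons_of_mem _ hA))
      show S (a (l.prod u)) v = S u (((a :: l).reverse).prod v)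
      rw [ha, hl, List.reverse_cons, List.prod_append, List.prod_cons, List.prod_nil,
        mul_one, Module.End.mul_apply]
  rw [hrev L h u v, ((List.reverse_perm L).symm.prod_eq' hc)]

end Aux

/-- The composition `T_{I 1} ∘ T_{I 2} ∘ ⋯ ∘ T_{I m}` of the operators along a tuple of
indices. -/
def compT {V : Type*} [AddCommGroup V] [Module ℂ V] {n m : ℕ}
    (T : Fin n → Module.End ℂ V) (I : Fin m → Fin n) : Module.End ℂ V :=
  (List.ofFn fun j => T (I j)).prod

/-- The vector `P_{i_1,…,i_k} := T_{i_1} ∘ ⋯ ∘ T_{i_{k-1}} (p_{i_k})` attached to a `k`-tuple of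
indices (here `k = k' + 1`). -/
def PP {V : Type*} [AddCommGroup V] [Module ℂ V] {n k' : ℕ}
    (T : Fin n → Module.End ℂ V) (p : Fin n → V) (I : Fin (k' + 1) → Fin n) : V :=
  compT T (Fin.init I) (p (I (Fin.last k')))

/-- Let `V` be a complex vector space with a symmetric bilinear form `S`, let `T_1,…,T_n` be
pairwise commuting endomorphisms of `V`, each symmetric with respect to `S`, and let
`p_1,…,p_n ∈ V` satisfy `T_i p_j = T_j p_i`.  Fix `k = k' + 1 ≥ 1`.  Then for any three
`k`-tuples of distinct indices `α = (i_1,…,i_k)`, `β = (j_1,…,j_k)`, `γ = (l_1,…,l_k)` the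
Frobenius property `S(T_{i_1}∘⋯∘T_{i_k}(P_β), P_γ) = S(P_α, T_{j_1}∘⋯∘T_{j_k}(P_γ))` holds,
i.e. the multiplication `P_α * v := T_{i_1}∘⋯∘T_{i_k}(v)` satisfies
`S(P_α * P_β, P_γ) = S(P_α, P_β * P_γ)`. -/
theorem stmt3 {V : Type*} [AddCommGroup V] [Module ℂ V] (n k' : ℕ)
    (S : V →ₗ[ℂ] V →ₗ[ℂ] ℂ) (hS : ∀ u v, S u v = S v u)
    (T : Fin n → Module.End ℂ V) (hT : ∀ i j, Commute (T i) (T j))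
    (hTS : ∀ j u v, S (T j u) v = S u (T j v))
    (p : Fin n → V) (hp : ∀ i j, T i (p j) = T j (p i)) :
    ∀ α β γ : Fin (k' + 1) → Fin n,
      Function.Injective α → Function.Injective β → Function.Injective γ →
      S (compT T α (PP T p β)) (PP T p γ) = S (PP T p α) (compT T β (PP T p γ)) := by
  intro α β γ _ _ _
  -- basic facts about lists of the form `List.ofFn fun j => T (I j)`
  have hmem : ∀ {m : ℕ} (I : Fin m → Fin n),
      ∀ A ∈ (List.ofFn fun j => T (I j)), ∃ i, A = T i := by
    intro m I A hA
    rw [List.mem_ofFn] at hA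
    obtain ⟨j, rfl⟩ := hA
    exact ⟨I j, rfl⟩
  have hsym : ∀ {m : ℕ} (I : Fin m → Fin n) (u v : V),
      S (compT T I u) v = S u (compT T I v) := by
    intro m I u v
    refine sym_prod S _ ?_ (list_pairwise_comm T hT _ (hmem I)) u v
    intro A hA u v
    obtain ⟨i, rfl⟩ := hmem I A hA
    exact hTS i u v
  have hcommT : ∀ (i : Fin n) {m : ℕ} (I : Fin m → Fin n),
      Commute (T i) (compT T I) := by
    intro i m I
    refine Commute.list_prod_right _ _ ?_
    intro b hb
    obtain ⟨j, rfl⟩ := hmem I b hb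
    exact hT i j
  have hcommC : ∀ {m m' : ℕ} (I : Fin m → Fin n) (J : Fin m' → Fin n),
      Commute (compT T I) (compT T J) := by
    intro m m' I J
    refine Commute.list_prod_left _ _ ?_
    intro a ha
    obtain ⟨i, rfl⟩ := hmem I a ha
    exact hcommT i J
  have hsplit : ∀ I : Fin (k' + 1) → Fin n,
      compT T I = compT T (Fin.init I) * T (I (Fin.last k')) := by
    intro I
    show (List.ofFn fun j => T (I j)).prod = _
    rw [List.ofFn_succ', List.prod_concat]
    rfl
  set A := compT T (Fin.init α) with hA
  set B := compT T (Fin.init β) with hB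
  set aT := T (α (Fin.last k')) with haT
  set bT := T (β (Fin.last k')) with hbT
  -- key vector identity
  have hkey : (A * aT * B) (p (β (Fin.last k'))) = (B * bT * A) (p (α (Fin.last k'))) := by
    have h1 : A * aT * B = A * B * aT := by
      rw [mul_assoc, mul_assoc, (hcommT _ (Fin.init β)).eq]
    have h2 : B * bT * A = A * B * bT := by
      rw [mul_assoc, (hcommT _ (Fin.init α)).eq, ← mul_assoc,
        (hcommC (Fin.init β) (Fin.init α)).eq]
    rw [h1, h2]
    show (A * B) (aT (p (β (Fin.last k')))) = (A * B) (bT (p (α (Fin.last k'))))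
    rw [haT, hbT, hp]
  have hLHS : compT T α (PP T p β) = (A * aT * B) (p (β (Fin.last k'))) := by
    rw [hsplit α]
    rfl
  have hRHS : compT T β (PP T p α) = (B * bT * A) (p (α (Fin.last k'))) := by
    rw [hsplit β]
    rfl
  calc S (compT T α (PP T p β)) (PP T p γ)
      = S ((A * aT * B) (p (β (Fin.last k')))) (PP T p γ) := by rw [hLHS]
    _ = S ((B * bT * A) (p (α (Fin.last k')))) (PP T p γ) := by rw [hkey]
    _ = S (compT T β (PP T p α)) (PP T p γ) := by rw [hRHS]
    _ = S (PP T p α) (compT T β (PP T p γ)) := hsym β _ _
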